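/- Let V, W be subspaces of ℝ^n and let v ∈ V be a nonzero vector with P_W v ≠ 0, where P_W is orthogonal projection onto W. Then the angle between P_W v and V is at most the maximum principal angle between V and W. (This justifies that θ₂* in the paper is also bounded by the maximum principal angle.) -/

import Mathlib

open Matrix Finset

local notation "⟪" x ", " y "⟫" => inner (𝕜 := ℝ) x y

/-- Identity map from plain functions to Euclidean space. -/
def toE {m : ℕ} (x : Fin m → ℝ) : EuclideanSpace ℝ (Fin m) := WithLp.toLp 2 x

@[simp] lemma toE_apply {m : ℕ} (x : Fin m → ℝ) (i : Fin m) : toE x i = x i := rfl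

lemma inner_eq_dot {m : ℕ} (x y : EuclideanSpace ℝ (Fin m)) :
    ⟪x, y⟫ = (x : Fin m → ℝ) ⬝ᵥ y := by
  simp [PiLp.inner_apply, dotProduct, RCLike.inner_apply, mul_comm]

lemma mulVec_mem_span {n m : ℕ} (M : Matrix (Fin n) (Fin m) ℝ) (x : Fin m → ℝ) :
    toE (M *ᵥ x) ∈
      Submodule.span ℝ (Set.range fun j => (WithLp.toLp 2 (Mᵀ j) : EuclideanSpace ℝ (Fin n))) := by
  have h : toE (M *ᵥ x) = ∑ j, x j • (WithLp.toLp 2 (Mᵀ j) : EuclideanSpace ℝ (Fin n)) := by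
    ext i
    simp [toE, mulVec, dotProduct, mul_comm, Finset.sum_apply]
  rw [h]
  exact Submodule.sum_mem _ fun j _ =>
    Submodule.smul_mem _ _ (Submodule.subset_span ⟨j, rfl⟩)

lemma proj_eq {n q : ℕ} (B : Matrix (Fin n) (Fin q) ℝ) (hB : Bᵀ * B = 1)
    (W : Submodule ℝ (EuclideanSpace ℝ (Fin n)))
    (hBW : Submodule.span ℝ (Set.range fun j => (WithLp.toLp 2 (Bᵀ j) : EuclideanSpace ℝ (Fin n))) = W)
    (v : EuclideanSpace ℝ (Fin n)) :
    ((Submodule.orthogonalProjection W v : W) : EuclideanSpace ℝ (Fin n)) = toE (B *ᵥ (Bᵀ *ᵥ v)) := by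
  have hmem : toE (B *ᵥ (Bᵀ *ᵥ v)) ∈ W := by
    rw [← hBW]; exact mulVec_mem_span B _
  have hgen : ∀ j, ⟪v - toE (B *ᵥ (Bᵀ *ᵥ v)),
      (WithLp.toLp 2 (Bᵀ j) : EuclideanSpace ℝ (Fin n))⟫ = 0 := by
    intro j
    have hdot : ∀ x : Fin n → ℝ, x ⬝ᵥ (Bᵀ j) = (Bᵀ *ᵥ x) j := by
      intro x; simp [mulVec, dotProduct, mul_comm]
    rw [inner_sub_left, inner_eq_dot, inner_eq_dot, hdot, hdot]
    show (Bᵀ *ᵥ v) j - (Bᵀ *ᵥ (B *ᵥ (Bᵀ *ᵥ v))) j = 0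
    rw [Matrix.mulVec_mulVec, hB, Matrix.one_mulVec, sub_self]
  have hkey : ∀ w ∈ W, ⟪v - toE (B *ᵥ (Bᵀ *ᵥ v)), w⟫ = 0 := by
    intro w hw
    rw [← hBW] at hw
    induction hw using Submodule.span_induction with
    | mem x hx => obtain ⟨j, rfl⟩ := hx; exact hgen j
    | zero => simp
    | add x y _ _ hx hy => rw [inner_add_right, hx, hy, add_zero]
    | smul a x _ hx => rw [inner_smul_right, hx, mul_zero]
  rw [← Submodule.starProjection_apply]
  exact (Submodule.eq_starProjection_of_mem_of_inner_eq_zero (K := W) hmem hkey)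

lemma norm_mulVec_eq {n m : ℕ} (M : Matrix (Fin n) (Fin m) ℝ) (hM : Mᵀ * M = 1)
    (x : Fin m → ℝ) : ‖toE (M *ᵥ x)‖ = ‖toE x‖ := by
  have h : ⟪toE (M *ᵥ x), toE (M *ᵥ x)⟫ = ⟪toE x, toE x⟫ := by
    rw [inner_eq_dot, inner_eq_dot]
    show (M *ᵥ x) ⬝ᵥ (M *ᵥ x) = x ⬝ᵥ x
    rw [dotProduct_mulVec, ← Matrix.mulVec_transpose, Matrix.mulVec_mulVec, hM,
      Matrix.one_mulVec]
  have h2 : ‖toE (M *ᵥ x)‖ ^ 2 = ‖toE x‖ ^ 2 := by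
    rw [← real_inner_self_eq_norm_sq, ← real_inner_self_eq_norm_sq, h]
  calc ‖toE (M *ᵥ x)‖ = √(‖toE (M *ᵥ x)‖ ^ 2) := (Real.sqrt_sq (norm_nonneg _)).symm
    _ = √(‖toE x‖ ^ 2) := by rw [h2]
    _ = ‖toE x‖ := Real.sqrt_sq (norm_nonneg _)

lemma key_ineq {p : ℕ} (S : Matrix (Fin p) (Fin p) ℝ) (hS : S.IsHermitian)
    (hpos : ∀ i, 0 ≤ hS.eigenvalues i) (c : Fin p → ℝ) :
    (⨅ i, hS.eigenvalues i) * ⟪toE c, toE (S *ᵥ c)⟫ ≤ ‖toE (S *ᵥ c)‖ ^ 2 := by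
  set u := hS.eigenvectorBasis with hu
  set μ := hS.eigenvalues with hμ
  set x : EuclideanSpace ℝ (Fin p) := toE c with hx
  set z : EuclideanSpace ℝ (Fin p) := toE (S *ᵥ c) with hz
  have hlam0 : 0 ≤ ⨅ i, μ i := Real.iInf_nonneg hpos
  have hlamle : ∀ i, (⨅ j, μ j) ≤ μ i := fun i =>
    ciInf_le (Set.Finite.bddBelow (Set.finite_range _)) i
  have hrep : ∀ i, u.repr z i = μ i * u.repr x i := by
    intro i
    have hsym : (Matrix.toEuclideanLin S).IsSymmetric :=
      Matrix.isHermitian_iff_isSymmetric.1 hS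
    have h1 : z = Matrix.toEuclideanLin S x := by
      simp [Matrix.toEuclideanLin_apply, hz, hx]
      rfl
    rw [u.repr_apply_apply, h1, ← hsym (u i) x]
    have h2 : Matrix.toEuclideanLin S (u i) = μ i • (u i : EuclideanSpace ℝ (Fin p)) := by
      have := hS.mulVec_eigenvectorBasis i
      simpa [Matrix.toEuclideanLin_apply, toE] using congrArg toE this
    rw [h2, real_inner_smul_left, u.repr_apply_apply]
  have hnorm : ‖z‖ ^ 2 = ∑ i, (μ i * u.repr x i) ^ 2 := by
    rw [← u.repr.norm_map z, ← real_inner_self_eq_norm_sq, inner_eq_dot]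
    show (u.repr z) ⬝ᵥ (u.repr z) = _
    simp [dotProduct, hrep, pow_two, mul_assoc, mul_comm, mul_left_comm]
  have hinner : ⟪x, z⟫ = ∑ i, μ i * (u.repr x i) ^ 2 := by
    rw [← u.repr.inner_map_map x z, inner_eq_dot]
    show (u.repr x) ⬝ᵥ (u.repr z) = _
    simp [dotProduct, hrep, pow_two]
    exact Finset.sum_congr rfl fun i _ => by ring
  rw [hinner, hnorm, Finset.mul_sum]
  refine Finset.sum_le_sum fun i _ => ?_
  have h3 := hlamle i
  have h4 := hpos i
  nlinarith [sq_nonneg (u.repr x i), mul_nonneg (mul_nonneg (sub_nonneg.2 h3) h4) (sq_nonneg (u.repr x i))]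

lemma arccos_antitone {x y : ℝ} (h : x ≤ y) : Real.arccos y ≤ Real.arccos x := by
  unfold Real.arccos
  have := Real.monotone_arcsin h
  linarith


/-- The smallest singular value of a real `p × q` matrix `M`, i.e. the square root of the
smallest eigenvalue of `M * Mᵀ` (over `ℝ`, `Mᴴ = Mᵀ`). -/
noncomputable def smallestSingularValue {p q : ℕ} (M : Matrix (Fin p) (Fin q) ℝ) : ℝ :=
  Real.sqrt (⨅ i, (Matrix.isHermitian_mul_conjTranspose_self M).eigenvalues i)

/-- The angle between a nonzero vector `v` and a subspace `U`, `arccos (‖P_U v‖ / ‖v‖)`. -/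
noncomputable def angleToSubspace {n : ℕ}
    (U : Submodule ℝ (EuclideanSpace ℝ (Fin n)))
    (v : EuclideanSpace ℝ (Fin n)) : ℝ :=
  Real.arccos (‖((Submodule.orthogonalProjection U v : U) : EuclideanSpace ℝ (Fin n))‖ / ‖v‖)

/-- For subspaces `V, W` of `ℝⁿ` with orthonormal basis matrices `A` (n×p) and `B` (n×q),
`p ≤ q`, and any nonzero `v ∈ V` with `P_W v ≠ 0`, the angle between `P_W v` and `V` is at
most the maximum principal angle between `V` and `W`, namely `arccos` of the smallest
singular value of `Aᵀ B`. (This bounds `θ₂*` by the maximum principal angle.) -/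
theorem angle_proj_le_maxPrincipalAngle (n p q : ℕ) (hpq : p ≤ q)
    (V W : Submodule ℝ (EuclideanSpace ℝ (Fin n)))
    (A : Matrix (Fin n) (Fin p) ℝ) (B : Matrix (Fin n) (Fin q) ℝ)
    (hA : Aᵀ * A = 1) (hB : Bᵀ * B = 1)
    (hAV : Submodule.span ℝ (Set.range fun j => (WithLp.toLp 2 (Aᵀ j) : EuclideanSpace ℝ (Fin n))) = V)
    (hBW : Submodule.span ℝ (Set.range fun j => (WithLp.toLp 2 (Bᵀ j) : EuclideanSpace ℝ (Fin n))) = W)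
    (v : EuclideanSpace ℝ (Fin n)) (hvV : v ∈ V) (hv : v ≠ 0)
    (hPv : ((Submodule.orthogonalProjection W v : W) : EuclideanSpace ℝ (Fin n)) ≠ 0) :
    angleToSubspace V ((Submodule.orthogonalProjection W v : W) : EuclideanSpace ℝ (Fin n)) ≤
      Real.arccos (smallestSingularValue (Aᵀ * B)) := by
  set M : Matrix (Fin p) (Fin q) ℝ := Aᵀ * B with hM
  have hMT : Mᴴ = Mᵀ := by ext i j; simp [Matrix.conjTranspose_apply]
  have hMTdef : Mᵀ = Bᵀ * A := by rw [hM, Matrix.transpose_mul, Matrix.transpose_transpose]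
  set c : Fin p → ℝ := Aᵀ *ᵥ v with hc
  have hv_eq : v = toE (A *ᵥ c) := by
    rw [hc, ← proj_eq A hA V hAV v, ← Submodule.starProjection_apply, Submodule.starProjection_eq_self_iff.2 hvV]
  set d : Fin q → ℝ := Mᵀ *ᵥ c with hd
  have hBv : Bᵀ *ᵥ v = d := by
    conv_lhs => rw [hv_eq]
    show Bᵀ *ᵥ (A *ᵥ c) = d
    rw [Matrix.mulVec_mulVec, ← hMTdef, hd]
  have hw : ((Submodule.orthogonalProjection W v : W) : EuclideanSpace ℝ (Fin n))
      = toE (B *ᵥ d) := by rw [proj_eq B hB W hBW v, hBv]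
  set S : Matrix (Fin p) (Fin p) ℝ := M * Mᴴ with hS'
  have hSdef : S = M * Mᵀ := by rw [hS', hMT]
  set w : EuclideanSpace ℝ (Fin n) := toE (B *ᵥ d) with hwdef
  have hAw : Aᵀ *ᵥ w = S *ᵥ c := by
    show Aᵀ *ᵥ (B *ᵥ d) = S *ᵥ c
    rw [Matrix.mulVec_mulVec, hd, Matrix.mulVec_mulVec, ← hM, ← hSdef]
  have hproj : ((Submodule.orthogonalProjection V w : V) : EuclideanSpace ℝ (Fin n))
      = toE (A *ᵥ (S *ᵥ c)) := by rw [proj_eq A hA V hAV w, hAw]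
  have hwn : ‖w‖ = ‖toE d‖ := norm_mulVec_eq B hB d
  have hpn : ‖((Submodule.orthogonalProjection V w : V) : EuclideanSpace ℝ (Fin n))‖
      = ‖toE (S *ᵥ c)‖ := by rw [hproj]; exact norm_mulVec_eq A hA _
  have hdpos : 0 < ‖toE d‖ := by
    rw [← hwn]
    exact norm_pos_iff.2 (by rw [hw] at hPv; exact hPv)
  -- inner identity
  have hinner : ⟪toE c, toE (S *ᵥ c)⟫ = ‖toE d‖ ^ 2 := by
    rw [← real_inner_self_eq_norm_sq, inner_eq_dot, inner_eq_dot]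
    show c ⬝ᵥ (S *ᵥ c) = d ⬝ᵥ d
    rw [hSdef, ← Matrix.mulVec_mulVec, dotProduct_mulVec, ← Matrix.mulVec_transpose, ← hd]
  have hpos : ∀ i, 0 ≤ (Matrix.isHermitian_mul_conjTranspose_self M).eigenvalues i :=
    fun i => (Matrix.posSemidef_self_mul_conjTranspose M).eigenvalues_nonneg i
  have hkey := key_ineq S (Matrix.isHermitian_mul_conjTranspose_self M) hpos c
  rw [hw]
  unfold angleToSubspace smallestSingularValue
  rw [hpn, hwn]
  apply arccos_antitone
  have hrpos : 0 ≤ ‖toE (S *ᵥ c)‖ / ‖toE d‖ := by positivity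
  have h1 : (⨅ i, (Matrix.isHermitian_mul_conjTranspose_self M).eigenvalues i)
      ≤ (‖toE (S *ᵥ c)‖ / ‖toE d‖) ^ 2 := by
    rw [div_pow, le_div_iff₀ (by positivity)]
    calc (⨅ i, (Matrix.isHermitian_mul_conjTranspose_self M).eigenvalues i) * ‖toE d‖ ^ 2
        = (⨅ i, (Matrix.isHermitian_mul_conjTranspose_self M).eigenvalues i)
            * ⟪toE c, toE (S *ᵥ c)⟫ := by rw [hinner]
      _ ≤ ‖toE (S *ᵥ c)‖ ^ 2 := hkey
  calc Real.sqrt (⨅ i, (Matrix.isHermitian_mul_conjTranspose_self M).eigenvalues i)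
      ≤ Real.sqrt ((‖toE (S *ᵥ c)‖ / ‖toE d‖) ^ 2) := Real.sqrt_le_sqrt h1
    _ = ‖toE (S *ᵥ c)‖ / ‖toE d‖ := Real.sqrt_sq hrpos
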